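/- If supp f ⊆ [−1/2,1/2], then for every i = 1,…,n and every σ ∈ (0,1], the probability that the nearest parent of Y_i is not its true parent satisfies P(X_i ≠ X_{(i)}) ≤ σn. -/

import Mathlib

open MeasureTheory Filter Set ProbabilityTheory

noncomputable section

/-- The i.i.d. dispersal model: `X₁,…,X_n` i.i.d. uniform on `[0,1]`, `D₁,…,D_n` i.i.d.
with density `f`, all `2n` variables jointly independent; the children are
`Y_i = X_i + σ D_i`. -/
structure IsIIDModel {Ω : Type*} [MeasurableSpace Ω] (P : Measure Ω)
    (n : ℕ) (σ : ℝ) (f : ℝ → ℝ) (X D : Fin n → Ω → ℝ) : Prop where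
  prob : IsProbabilityMeasure P
  sigma_pos : 0 < σ
  sigma_le_one : σ ≤ 1
  f_meas : Measurable f
  f_nonneg : ∀ z, 0 ≤ f z
  f_prob : ∫ z, f z = 1
  X_meas : ∀ i, Measurable (X i)
  D_meas : ∀ i, Measurable (D i)
  lawX : ∀ i, Measure.map (X i) P = volume.restrict (Set.Icc (0:ℝ) 1)
  lawD : ∀ i, Measure.map (D i) P = volume.withDensity fun z => ENNReal.ofReal (f z)
  indep : iIndepFun (m := fun _ : Fin n ⊕ Fin n => Real.measurableSpace) (Sum.elim X D) P

/-- The children `Y_i = X_i + σ D_i`. -/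
def Ychild {Ω : Type*} {n : ℕ} (σ : ℝ) (X D : Fin n → Ω → ℝ) (i : Fin n) (ω : Ω) : ℝ :=
  X i ω + σ * D i ω

/-- `Xnear` is a nearest-parent selection: `Xnear i` takes values among the parents and
minimizes the distance to the child `Y_i`. -/
def IsNearestParent {Ω : Type*} [MeasurableSpace Ω] {n : ℕ} (σ : ℝ) (X D Xnear : Fin n → Ω → ℝ) : Prop :=
  (∀ i, Measurable (Xnear i)) ∧
  (∀ (i : Fin n) (ω : Ω), ∃ j, Xnear i ω = X j ω) ∧
  (∀ (i j : Fin n) (ω : Ω), |Ychild σ X D i ω - Xnear i ω| ≤ |Ychild σ X D i ω - X j ω|)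

end

/-- Lemma 10: probability of a nearest-parent mismatch. -/
theorem nearest_parent_mismatch
    {Ω : Type*} [MeasurableSpace Ω] (P : Measure Ω)
    (n : ℕ) (σ : ℝ) (f : ℝ → ℝ) (X D : Fin n → Ω → ℝ)
    (model : IsIIDModel P n σ f X D)
    (hsupp : ∀ z, z ∉ Set.Icc (-(1/2) : ℝ) (1/2) → f z = 0)
    (Xnear : Fin n → Ω → ℝ) (hnear : IsNearestParent σ X D Xnear)
    (i : Fin n) :
    (P {ω | X i ω ≠ Xnear i ω}).toReal ≤ σ * n := by
  obtain ⟨hXnm, hXnval, hXnmin⟩ := hnear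
  have hP : IsProbabilityMeasure P := model.prob
  have hσ : 0 < σ := model.sigma_pos
  have hX := model.X_meas
  have hD := model.D_meas
  set Y : Ω → ℝ := fun ω => X i ω + σ * D i ω with hYdef
  have hYmeas : Measurable Y := (hX i).add ((hD i).const_mul σ)
  -- the bad "null" set
  set N : Set Ω := {ω | ¬ |D i ω| ≤ 1/2} with hNdef
  have hNmeas : MeasurableSet N := by
    have h1 : {z : ℝ | ¬ |z| ≤ 1/2} = {z : ℝ | |z| ≤ 1/2}ᶜ := rfl
    have h2 : N = (D i) ⁻¹' {z | ¬ |z| ≤ 1/2} := rfl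
    rw [h2, h1]
    exact (hD i) (measurableSet_le measurable_abs measurable_const).compl
  have hNnull : P N = 0 := by
    have hset : MeasurableSet {z : ℝ | ¬ |z| ≤ 1/2} := by
      have h1 : {z : ℝ | ¬ |z| ≤ 1/2} = {z : ℝ | |z| ≤ 1/2}ᶜ := rfl
      rw [h1]
      exact (measurableSet_le measurable_abs measurable_const).compl
    have : P N = (Measure.map (D i) P) {z | ¬ |z| ≤ 1/2} := by
      rw [Measure.map_apply (hD i) hset]; rfl
    rw [this, model.lawD i, withDensity_apply _ hset]
    have : ∀ᵐ z ∂(volume.restrict {z : ℝ | ¬ |z| ≤ 1/2}),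
        ENNReal.ofReal (f z) = 0 := by
      refine ae_restrict_of_forall_mem hset ?_
      intro z hz
      have : f z = 0 := hsupp z (by simpa [Set.mem_Icc, abs_le] using hz)
      simp [this]
    rw [lintegral_congr_ae this]
    simp
  -- the events E j
  set E : Fin n → Set Ω := fun j => {ω | |Y ω - X j ω| ≤ σ/2} with hEdef
  have hEmeas : ∀ j, MeasurableSet (E j) :=
    fun j => measurableSet_le (by fun_prop) measurable_const
  -- probability bound for each E j, j ≠ i
  have hEbound : ∀ j, j ≠ i → P (E j) ≤ ENNReal.ofReal σ := by
    intro j hji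
    have hind0 : IndepFun (fun ω => (X i ω, D i ω)) (X j) P := by
      exact model.indep.indepFun_prodMk (fun k => by cases k <;> [exact hX _; exact hD _])
        (Sum.inl i) (Sum.inr i) (Sum.inl j)
        (by simp [Ne, Sum.inl.injEq, hji.symm]) (by simp)
    have hind : IndepFun Y (X j) P := by
      have hg : Measurable (fun p : ℝ × ℝ => p.1 + σ * p.2) := by fun_prop
      exact hind0.comp hg measurable_id
    have hmap : Measure.map (fun ω => (Y ω, X j ω)) P
        = (Measure.map Y P).prod (Measure.map (X j) P) :=
      (indepFun_iff_map_prod_eq_prod_map_map hYmeas.aemeasurable (hX j).aemeasurable).mp hind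
    have hS : MeasurableSet {p : ℝ × ℝ | |p.1 - p.2| ≤ σ/2} :=
      measurableSet_le (by fun_prop) measurable_const
    have hset : E j = (fun ω => (Y ω, X j ω)) ⁻¹' {p : ℝ × ℝ | |p.1 - p.2| ≤ σ/2} := rfl
    rw [hset, ← Measure.map_apply (hYmeas.prodMk (hX j)) hS, hmap, Measure.prod_apply hS]
    have hbound : ∀ y : ℝ, (Measure.map (X j) P) (Prod.mk y ⁻¹' {p : ℝ × ℝ | |p.1 - p.2| ≤ σ/2})
        ≤ ENNReal.ofReal σ := by
      intro y
      have : Prod.mk y ⁻¹' {p : ℝ × ℝ | |p.1 - p.2| ≤ σ/2} = Set.Icc (y - σ/2) (y + σ/2) := by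
        ext x
        simp only [Set.mem_preimage, Set.mem_setOf_eq, Set.mem_Icc, abs_le]
        constructor
        · rintro ⟨h1, h2⟩; constructor <;> linarith
        · rintro ⟨h1, h2⟩; constructor <;> linarith
      rw [this, model.lawX j]
      calc (volume.restrict (Set.Icc (0:ℝ) 1)) (Set.Icc (y - σ/2) (y + σ/2))
          ≤ volume (Set.Icc (y - σ/2) (y + σ/2)) := Measure.restrict_le_self _
        _ = ENNReal.ofReal σ := by rw [Real.volume_Icc]; ring_nf
    calc ∫⁻ y, (Measure.map (X j) P) (Prod.mk y ⁻¹' {p : ℝ × ℝ | |p.1 - p.2| ≤ σ/2})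
          ∂(Measure.map Y P)
        ≤ ∫⁻ _, ENNReal.ofReal σ ∂(Measure.map Y P) := lintegral_mono hbound
      _ = ENNReal.ofReal σ := by
          have : IsProbabilityMeasure (Measure.map Y P) :=
            Measure.isProbabilityMeasure_map hYmeas.aemeasurable
          simp
  -- inclusion
  have hincl : {ω | X i ω ≠ Xnear i ω} ⊆ N ∪ ⋃ j ∈ Finset.univ.erase i, E j := by
    intro ω hω
    by_cases hd : |D i ω| ≤ 1/2
    · right
      obtain ⟨j, hj⟩ := hXnval i ω
      have hji : j ≠ i := by
        rintro rfl
        exact hω hj.symm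
      refine Set.mem_biUnion (Finset.mem_erase.mpr ⟨hji, Finset.mem_univ j⟩) ?_
      have h1 : |Ychild σ X D i ω - Xnear i ω| ≤ |Ychild σ X D i ω - X i ω| := hXnmin i i ω
      have h2 : Ychild σ X D i ω = Y ω := rfl
      have h3 : |Y ω - X i ω| = σ * |D i ω| := by
        simp only [hYdef]
        rw [show X i ω + σ * D i ω - X i ω = σ * D i ω by ring, abs_mul, abs_of_pos hσ]
      have h4 : σ * |D i ω| ≤ σ / 2 := by nlinarith
      show |Y ω - X j ω| ≤ σ/2
      rw [← hj]
      calc |Y ω - Xnear i ω| = |Ychild σ X D i ω - Xnear i ω| := rfl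
        _ ≤ |Ychild σ X D i ω - X i ω| := h1
        _ = σ * |D i ω| := by rw [h2] at *; exact h3
        _ ≤ σ/2 := h4
    · left; exact hd
  -- put it together
  have hle : P {ω | X i ω ≠ Xnear i ω} ≤ ENNReal.ofReal (σ * n) := by
    calc P {ω | X i ω ≠ Xnear i ω} ≤ P (N ∪ ⋃ j ∈ Finset.univ.erase i, E j) :=
          measure_mono hincl
      _ ≤ P N + P (⋃ j ∈ Finset.univ.erase i, E j) := measure_union_le _ _
      _ = P (⋃ j ∈ Finset.univ.erase i, E j) := by rw [hNnull, zero_add]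
      _ ≤ ∑ j ∈ Finset.univ.erase i, P (E j) := measure_biUnion_finset_le _ _
      _ ≤ ∑ j ∈ Finset.univ.erase i, ENNReal.ofReal σ := by
          refine Finset.sum_le_sum fun j hj => ?_
          exact hEbound j (Finset.mem_erase.mp hj).1
      _ = (Finset.univ.erase i).card * ENNReal.ofReal σ := by
          rw [Finset.sum_const, nsmul_eq_mul]
      _ ≤ (n : ENNReal) * ENNReal.ofReal σ := by
          gcongr
          have hcard : (Finset.univ.erase i).card ≤ n :=
            (Finset.card_le_univ _).trans (by simp)
          exact Nat.cast_le.mpr hcard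
      _ = ENNReal.ofReal (σ * n) := by
          rw [ENNReal.ofReal_mul hσ.le, ENNReal.ofReal_natCast, mul_comm]
  have h := ENNReal.toReal_mono (by simp) hle
  rwa [ENNReal.toReal_ofReal (by positivity)] at h
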